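/- Let p be a prime and let K be a field with a nontrivial nonarchimedean multiplicative norm ‖·‖ : K → ℝ≥0. Assume the value group of K is p-divisible (for every nonzero x ∈ K there is z ∈ K with ‖z‖^p = ‖x‖) and the residue field of K is perfect (for every a ∈ K with ‖a‖ ≤ 1 there exists b ∈ K with ‖b‖ ≤ 1 and ‖a − b^p‖ < 1). Then every nonzero x ∈ K with ‖x‖ ≤ 1 can be written as x = y^p·(1 + u) with y, u ∈ K, ‖y‖ ≤ 1 and ‖u‖ < 1. -/

import Mathlib

/-- Let `p` be a prime and `K` a field with a nontrivial nonarchimedean multiplicative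
norm `v` whose value group is `p`-divisible and whose residue field is perfect.  Then
every nonzero `x` with `v x ≤ 1` can be written as `x = y^p * (1 + u)` with `v y ≤ 1`
and `v u < 1`. -/
theorem exists_pth_power_decomposition (p : ℕ) (hp : p.Prime)
    (K : Type*) [Field K] (v : Valuation K NNReal)
    (hnt : ∃ x : K, x ≠ 0 ∧ v x ≠ 1)
    (hdiv : ∀ x : K, x ≠ 0 → ∃ z : K, (v z) ^ p = v x)
    (hperf : ∀ a : K, v a ≤ 1 → ∃ b : K, v b ≤ 1 ∧ v (a - b ^ p) < 1) :
    ∀ x : K, x ≠ 0 → v x ≤ 1 →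
      ∃ y u : K, v y ≤ 1 ∧ v u < 1 ∧ x = y ^ p * (1 + u) := by
  intro x hx hx1
  obtain ⟨z, hz⟩ := hdiv x hx
  have hvx : v x ≠ 0 := (Valuation.ne_zero_iff v).mpr hx
  have hvz : v z ≠ 0 := fun h => hvx (by rw [← hz, h, zero_pow hp.ne_zero])
  have hz0 : z ≠ 0 := (Valuation.ne_zero_iff v).mp hvz
  set a : K := x / z ^ p with ha
  have hva : v a = 1 := by
    rw [ha, map_div₀, map_pow, hz, div_self hvx]
  obtain ⟨b, hb1, hab⟩ := hperf a hva.le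
  have hvbp : v (b ^ p) = 1 := by
    have : v (b ^ p) = v (a - (a - b ^ p)) := by ring_nf
    rw [this, Valuation.map_sub_eq_of_lt_left v (by rw [hva]; exact hab), hva]
  have hb0 : b ≠ 0 := by
    intro h
    rw [h, zero_pow hp.ne_zero, map_zero] at hvbp
    exact zero_ne_one hvbp
  refine ⟨z * b, a / b ^ p - 1, ?_, ?_, ?_⟩
  · rw [map_mul]
    have hvz1 : v z ≤ 1 := by
      have : (v z) ^ p ≤ 1 := hz ▸ hx1
      exact pow_le_one_iff_of_nonneg zero_le hp.ne_zero |>.mp this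
    calc v z * v b ≤ 1 * 1 := mul_le_mul' hvz1 hb1
      _ = 1 := one_mul 1
  · have : a / b ^ p - 1 = (a - b ^ p) / b ^ p := by
      field_simp
    rw [this, map_div₀, hvbp, div_one]
    exact hab
  · have hbp : (b : K) ^ p ≠ 0 := pow_ne_zero _ hb0
    have hzp : (z : K) ^ p ≠ 0 := pow_ne_zero _ hz0
    field_simp [ha, mul_pow]
    have h2 : b ^ p + (a - b ^ p) = a := by ring
    have h1 : z ^ p * (z ^ p)⁻¹ = 1 := mul_inv_cancel₀ hzp
    rw [h2, ha, mul_pow, div_eq_mul_inv]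
    linear_combination (-(x * b ^ p)) * h1
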